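/- Let B : [0,1] → ℝ be continuous with B(0) = 0, let u, v be B-solutions with u(0) = 0, u(1) = 1, v(0) = 1, v(1) = 0, let α := u'(0)·v(0) − u(0)·v'(0) be the constant Wronskian, assumed nonzero, and let T be the associated Green operator. Then for every Lebesgue integrable f : [0,1] → ℝ and every h ∈ H1: E(Tf, h) = ∫_0^1 f(x)h(x) dx. That is, T is a right inverse of the random Schrödinger operator L in the weak sense ⟨LTf, h⟩ = ⟨f, h⟩. -/
import Mathlib


open MeasureTheory intervalIntegral

/-- `u` is a pathwise (`B`-)solution of the homogeneous equation `-u'' + B'·u = 0`. -/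
def IsBSolution (B u u' : ℝ → ℝ) : Prop :=
  (∀ x ∈ Set.Icc (0:ℝ) 1, HasDerivWithinAt u (u' x) (Set.Icc 0 1) x) ∧
  ContinuousOn u' (Set.Icc 0 1) ∧
  ∀ x ∈ Set.Icc (0:ℝ) 1, u' x = u' 0 + u x * B x - ∫ y in (0:ℝ)..x, u' y * B y

/-- `h` belongs to `H1` with (a.e.) derivative `g`: `h` is absolutely continuous on
`[0,1]` with `h(0) = h(1) = 0`, i.e. `h(x) = ∫_0^x g` for an integrable `g` with
`∫_0^1 g = 0`. -/
def MemH1 (h g : ℝ → ℝ) : Prop :=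
  MeasureTheory.IntegrableOn g (Set.Icc 0 1) ∧
  (∫ t in (0:ℝ)..1, g t) = 0 ∧
  ∀ x ∈ Set.Icc (0:ℝ) 1, h x = ∫ t in (0:ℝ)..x, g t

/-- The pathwise bilinear form `E(f,h)`, the weak meaning of `⟨Lf, h⟩` for
`L = -d²/dx² + B'`; here `f'` and `h'` are the derivatives of `f` and `h`. -/
noncomputable def Eform (B f f' h h' : ℝ → ℝ) : ℝ :=
  (∫ x in (0:ℝ)..1, f' x * h' x) -
    ∫ x in (0:ℝ)..1, (f' x * h x + f x * h' x) * B x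

/-- The Green operator `T` built from the independent solutions `u`, `v` and the
Wronskian `α`: `(Tf)(x) = α⁻¹·(v(x)·∫_0^x u f + u(x)·∫_x^1 v f)`. -/
noncomputable def greenOp (α : ℝ) (u v f : ℝ → ℝ) (x : ℝ) : ℝ :=
  α⁻¹ * (v x * (∫ y in (0:ℝ)..x, u y * f y) + u x * (∫ y in x..(1:ℝ), v y * f y))

/-- The derivative of `Tf`:
`(Tf)'(x) = α⁻¹·(v'(x)·∫_0^x u f + u'(x)·∫_x^1 v f)`. -/
noncomputable def greenOpDeriv (α : ℝ) (u u' v v' f : ℝ → ℝ) (x : ℝ) : ℝ :=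
  α⁻¹ * (v' x * (∫ y in (0:ℝ)..x, u y * f y) + u' x * (∫ y in x..(1:ℝ), v y * f y))

/-- The Green operator is a right inverse of the random Schrödinger operator in the
weak sense: `⟨LTf, h⟩ = ⟨f, h⟩`, i.e. `E(Tf, h) = ∫_0^1 f h` for every integrable `f`
and every `h ∈ H1`. -/
lemma fubini_parts {p q : ℝ → ℝ} {r : ℝ} (hr : 0 ≤ r)
    (hp : IntegrableOn p (Set.Icc 0 r)) (hq : IntegrableOn q (Set.Icc 0 r)) :
    (∫ s in (0:ℝ)..r, p s * ∫ t in (0:ℝ)..s, q t)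
      + (∫ t in (0:ℝ)..r, q t * ∫ s in (0:ℝ)..t, p s)
      = (∫ s in (0:ℝ)..r, p s) * (∫ t in (0:ℝ)..r, q t) := by
  set μ : Measure ℝ := volume.restrict (Set.Icc 0 r) with hμ
  have hiic : ∀ s ∈ Set.Icc (0:ℝ) r,
      (∫ t in (0:ℝ)..s, q t) = ∫ t, (Set.Iic s).indicator q t ∂μ := by
    intro s hs
    rw [hμ, MeasureTheory.integral_indicator measurableSet_Iic,
      Measure.restrict_restrict measurableSet_Iic]
    have : Set.Iic s ∩ Set.Icc 0 r = Set.Icc 0 s := by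
      ext t; simp only [Set.mem_inter_iff, Set.mem_Iic, Set.mem_Icc]
      exact ⟨fun ⟨h1, h2, h3⟩ => ⟨h2, h1⟩, fun ⟨h1, h2⟩ => ⟨h2, h1, h2.trans hs.2⟩⟩
    rw [this, MeasureTheory.integral_Icc_eq_integral_Ioc, intervalIntegral.integral_of_le hs.1]
  have hiio : ∀ t ∈ Set.Icc (0:ℝ) r,
      (∫ s in (0:ℝ)..t, p s) = ∫ s, (Set.Iio t).indicator p s ∂μ := by
    intro t ht
    rw [hμ, MeasureTheory.integral_indicator measurableSet_Iio,
      Measure.restrict_restrict measurableSet_Iio]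
    have : Set.Iio t ∩ Set.Icc 0 r = Set.Ico 0 t := by
      ext s; simp only [Set.mem_inter_iff, Set.mem_Iio, Set.mem_Icc, Set.mem_Ico]
      exact ⟨fun ⟨h1, h2, h3⟩ => ⟨h2, h1⟩, fun ⟨h1, h2⟩ => ⟨h2, h1, h2.le.trans ht.2⟩⟩
    rw [this, MeasureTheory.setIntegral_congr_set MeasureTheory.Ico_ae_eq_Ioc,
      intervalIntegral.integral_of_le ht.1]
  have hout : ∀ w : ℝ → ℝ, (∫ x in (0:ℝ)..r, w x) = ∫ x, w x ∂μ := by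
    intro w
    rw [intervalIntegral.integral_of_le hr, hμ, ← MeasureTheory.integral_Icc_eq_integral_Ioc]
  set G : ℝ × ℝ → ℝ := fun z => p z.1 * q z.2 with hG
  have hGint : Integrable G (μ.prod μ) := Integrable.mul_prod hp hq
  set S₁ : Set (ℝ × ℝ) := {z | z.2 ≤ z.1} with hS₁
  set S₂ : Set (ℝ × ℝ) := {z | z.1 < z.2} with hS₂
  have hS₁m : MeasurableSet S₁ := measurableSet_le measurable_snd measurable_fst
  have hS₂m : MeasurableSet S₂ := measurableSet_lt measurable_fst measurable_snd
  -- term 1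
  have hint1 : Integrable (Function.uncurry fun s t => p s * (Set.Iic s).indicator q t)
      (μ.prod μ) := by
    have : (Function.uncurry fun s t => p s * (Set.Iic s).indicator q t) = S₁.indicator G := by
      funext z
      rcases z with ⟨s, t⟩
      by_cases hst : t ≤ s
      · simp [Function.uncurry, hst, hS₁, hG, Set.indicator_apply]
      · simp [Function.uncurry, hst, hS₁, hG, Set.indicator_apply]
    rw [this]
    exact hGint.indicator hS₁m
  have t1 : (∫ s in (0:ℝ)..r, p s * ∫ t in (0:ℝ)..s, q t)
      = ∫ z, S₁.indicator G z ∂(μ.prod μ) := by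
    rw [hout]
    have e1 : (∫ s, (p s * ∫ t in (0:ℝ)..s, q t) ∂μ)
        = ∫ s, (∫ t, p s * (Set.Iic s).indicator q t ∂μ) ∂μ := by
      rw [hμ]
      refine MeasureTheory.setIntegral_congr_fun measurableSet_Icc fun s hs => ?_
      rw [hiic s hs, MeasureTheory.integral_const_mul]
    rw [e1, MeasureTheory.integral_integral hint1]
    congr 1
    funext z
    rcases z with ⟨s, t⟩
    by_cases hst : t ≤ s
    · simp [hst, hS₁, hG, Set.indicator_apply]
    · simp [hst, hS₁, hG, Set.indicator_apply]
  -- term 2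
  have hint2 : Integrable (Function.uncurry fun t s => q t * (Set.Iio t).indicator p s)
      (μ.prod μ) := by
    have : (Function.uncurry fun t s => q t * (Set.Iio t).indicator p s)
        = {z : ℝ × ℝ | z.2 < z.1}.indicator (fun z => q z.1 * p z.2) := by
      funext z
      rcases z with ⟨t, s⟩
      by_cases hst : s < t
      · simp [Function.uncurry, Set.indicator_apply, hst]
      · simp [Function.uncurry, Set.indicator_apply, hst]
    rw [this]
    exact (Integrable.mul_prod hq hp).indicator (measurableSet_lt measurable_snd measurable_fst)
  have t2 : (∫ t in (0:ℝ)..r, q t * ∫ s in (0:ℝ)..t, p s)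
      = ∫ z, S₂.indicator G z ∂(μ.prod μ) := by
    rw [hout]
    have e1 : (∫ t, (q t * ∫ s in (0:ℝ)..t, p s) ∂μ)
        = ∫ t, (∫ s, q t * (Set.Iio t).indicator p s ∂μ) ∂μ := by
      rw [hμ]
      refine MeasureTheory.setIntegral_congr_fun measurableSet_Icc fun t ht => ?_
      rw [hiio t ht, MeasureTheory.integral_const_mul]
    rw [e1, MeasureTheory.integral_integral hint2]
    rw [← MeasureTheory.integral_prod_swap (fun z => S₂.indicator G z)]
    congr 1
    funext z
    rcases z with ⟨t, s⟩
    by_cases hst : s < t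
    · simp [Prod.swap, Set.indicator_apply, hst, hS₂, hG, mul_comm]
    · simp [Prod.swap, Set.indicator_apply, hst, hS₂, hG, mul_comm]
  rw [t1, t2, ← MeasureTheory.integral_add (hGint.indicator hS₁m) (hGint.indicator hS₂m)]
  have : (fun z => S₁.indicator G z + S₂.indicator G z) = G := by
    funext z
    by_cases hz : z.2 ≤ z.1
    · have hz2 : z ∉ S₂ := by simp [hS₂]; exact hz
      simp [Set.indicator_of_mem (show z ∈ S₁ from hz), Set.indicator_of_notMem hz2]
    · have hz2 : z ∈ S₂ := lt_of_not_ge hz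
      simp [Set.indicator_of_notMem (show z ∉ S₁ from hz), Set.indicator_of_mem hz2]
  rw [this, hG, MeasureTheory.integral_prod_mul, hout, hout]


lemma iiIcc {w : ℝ → ℝ} {x : ℝ} (hw : MeasureTheory.IntegrableOn w (Set.Icc 0 x)) (hx : (0:ℝ) ≤ x) :
    IntervalIntegrable w MeasureTheory.volume 0 x :=
  (intervalIntegrable_iff_integrableOn_Icc_of_le hx).2 hw

lemma prod_rule_int {p q a b : ℝ → ℝ} {a0 b0 : ℝ}
    (hp : IntegrableOn p (Set.Icc 0 1)) (hq : IntegrableOn q (Set.Icc 0 1))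
    (ha : ∀ x ∈ Set.Icc (0:ℝ) 1, a x = a0 + ∫ y in (0:ℝ)..x, p y)
    (hb : ∀ x ∈ Set.Icc (0:ℝ) 1, b x = b0 + ∫ y in (0:ℝ)..x, q y) :
    ∀ x ∈ Set.Icc (0:ℝ) 1,
      a x * b x = a0 * b0 + ∫ y in (0:ℝ)..x, (p y * b y + a y * q y) := by
  intro x hx
  have hsub : Set.Icc (0:ℝ) x ⊆ Set.Icc 0 1 := Set.Icc_subset_Icc le_rfl hx.2
  have hpx : IntegrableOn p (Set.Icc 0 x) := hp.mono_set hsub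
  have hqx : IntegrableOn q (Set.Icc 0 x) := hq.mono_set hsub
  have huicc : Set.uIcc (0:ℝ) x = Set.Icc 0 x := Set.uIcc_of_le hx.1
  have hPc : ContinuousOn (fun y => ∫ t in (0:ℝ)..y, p t) (Set.Icc 0 x) := by
    have := intervalIntegral.continuousOn_primitive_interval (a := 0) (b := x)
      (f := p) (μ := volume) (by rwa [huicc])
    rwa [huicc] at this
  have hQc : ContinuousOn (fun y => ∫ t in (0:ℝ)..y, q t) (Set.Icc 0 x) := by
    have := intervalIntegral.continuousOn_primitive_interval (a := 0) (b := x)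
      (f := q) (μ := volume) (by rwa [huicc])
    rwa [huicc] at this
  have hi1 : IntervalIntegrable p volume 0 x :=
    (intervalIntegrable_iff_integrableOn_Icc_of_le hx.1).2 hpx
  have hi2 : IntervalIntegrable q volume 0 x :=
    (intervalIntegrable_iff_integrableOn_Icc_of_le hx.1).2 hqx
  have hi3 : IntervalIntegrable (fun y => p y * ∫ t in (0:ℝ)..y, q t) volume 0 x :=
    (intervalIntegrable_iff_integrableOn_Icc_of_le hx.1).2
      (hpx.mul_continuousOn hQc isCompact_Icc)
  have hi4 : IntervalIntegrable (fun y => q y * ∫ t in (0:ℝ)..y, p t) volume 0 x :=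
    (intervalIntegrable_iff_integrableOn_Icc_of_le hx.1).2
      (hqx.mul_continuousOn hPc isCompact_Icc)
  have congr1 : (∫ y in (0:ℝ)..x, (p y * b y + a y * q y))
      = ∫ y in (0:ℝ)..x, ((p y * b0 + p y * ∫ t in (0:ℝ)..y, q t)
          + (a0 * q y + q y * ∫ t in (0:ℝ)..y, p t)) := by
    refine intervalIntegral.integral_congr fun y hy => ?_
    rw [huicc] at hy
    rw [hb y (hsub hy), ha y (hsub hy)]
    ring
  rw [congr1, intervalIntegral.integral_add ((hi1.mul_const b0).add hi3)
      ((hi2.const_mul a0).add hi4),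
    intervalIntegral.integral_add (hi1.mul_const b0) hi3,
    intervalIntegral.integral_add (hi2.const_mul a0) hi4,
    intervalIntegral.integral_mul_const, intervalIntegral.integral_const_mul]
  have hfub := fubini_parts hx.1 hpx hqx
  rw [ha x hx, hb x hx]
  nlinarith [hfub]

theorem green_right_inverse (B u u' v v' : ℝ → ℝ)
    (hB : ContinuousOn B (Set.Icc 0 1)) (hB0 : B 0 = 0)
    (hu : IsBSolution B u u') (hv : IsBSolution B v v')
    (hu0 : u 0 = 0) (hu1 : u 1 = 1) (hv0 : v 0 = 1) (hv1 : v 1 = 0)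
    (α : ℝ) (hαdef : α = u' 0 * v 0 - u 0 * v' 0) (hα : α ≠ 0)
    (f : ℝ → ℝ) (hf : MeasureTheory.IntegrableOn f (Set.Icc 0 1))
    (h g : ℝ → ℝ) (hh : MemH1 h g) :
    Eform B (greenOp α u v f) (greenOpDeriv α u u' v v' f) h g
      = ∫ x in (0:ℝ)..1, f x * h x := by
  have h01 : (0:ℝ) ≤ 1 := zero_le_one
  have hmem1 : (1:ℝ) ∈ Set.Icc (0:ℝ) 1 := ⟨h01, le_rfl⟩
  have huicc : Set.uIcc (0:ℝ) 1 = Set.Icc 0 1 := Set.uIcc_of_le h01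
  -- continuity of u, v
  have hucont : ContinuousOn u (Set.Icc 0 1) := fun x hx => (hu.1 x hx).continuousWithinAt
  have hvcont : ContinuousOn v (Set.Icc 0 1) := fun x hx => (hv.1 x hx).continuousWithinAt
  have hu'c : ContinuousOn u' (Set.Icc 0 1) := hu.2.1
  have hv'c : ContinuousOn v' (Set.Icc 0 1) := hv.2.1
  -- integrable products
  have hufi : IntegrableOn (fun y => u y * f y) (Set.Icc 0 1) :=
    IntegrableOn.continuousOn_mul hucont hf isCompact_Icc
  have hvfi : IntegrableOn (fun y => v y * f y) (Set.Icc 0 1) :=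
    IntegrableOn.continuousOn_mul hvcont hf isCompact_Icc
  -- primitives
  set P : ℝ → ℝ := fun x => ∫ y in (0:ℝ)..x, u y * f y with hPdef
  set Q : ℝ → ℝ := fun x => ∫ y in x..(1:ℝ), v y * f y with hQdef
  have hPc : ContinuousOn P (Set.Icc 0 1) := by
    have := intervalIntegral.continuousOn_primitive_interval (a := 0) (b := 1)
      (μ := volume) (f := fun y => u y * f y) (by rwa [huicc])
    rwa [huicc] at this
  have hQc : ContinuousOn Q (Set.Icc 0 1) := by
    have := intervalIntegral.continuousOn_primitive_interval_left (a := 0) (b := 1)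
      (μ := volume) (f := fun y => v y * f y) (by rwa [huicc])
    rwa [huicc] at this
  have hPrep : ∀ x ∈ Set.Icc (0:ℝ) 1, P x = 0 + ∫ y in (0:ℝ)..x, u y * f y := by
    intro x hx; rw [zero_add]
  set Q0 : ℝ := ∫ y in (0:ℝ)..1, v y * f y with hQ0def
  have hQrep : ∀ x ∈ Set.Icc (0:ℝ) 1, Q x = Q0 + ∫ y in (0:ℝ)..x, -(v y * f y) := by
    intro x hx
    have h1 : IntervalIntegrable (fun y => v y * f y) volume 0 1 :=
      (intervalIntegrable_iff_integrableOn_Icc_of_le h01).2 hvfi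
    have h2 : IntervalIntegrable (fun y => v y * f y) volume 0 x :=
      (intervalIntegrable_iff_integrableOn_Icc_of_le hx.1).2
        (hvfi.mono_set (Set.Icc_subset_Icc le_rfl hx.2))
    rw [intervalIntegral.integral_neg, hQdef, hQ0def]
    have := intervalIntegral.integral_interval_sub_left h1 h2
    simp only [] at this ⊢
    linarith [this]
  -- compensated derivatives
  set a₁ : ℝ → ℝ := fun x => v' x - v x * B x with ha₁def
  set a₂ : ℝ → ℝ := fun x => u' x - u x * B x with ha₂def
  have ha₁c : ContinuousOn a₁ (Set.Icc 0 1) := hv'c.sub (hvcont.mul hB)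
  have ha₂c : ContinuousOn a₂ (Set.Icc 0 1) := hu'c.sub (hucont.mul hB)
  have ha₁rep : ∀ x ∈ Set.Icc (0:ℝ) 1, a₁ x = v' 0 + ∫ y in (0:ℝ)..x, -(v' y * B y) := by
    intro x hx
    rw [intervalIntegral.integral_neg, ha₁def]
    have := hv.2.2 x hx
    simp only []
    linarith [this]
  have ha₂rep : ∀ x ∈ Set.Icc (0:ℝ) 1, a₂ x = u' 0 + ∫ y in (0:ℝ)..x, -(u' y * B y) := by
    intro x hx
    rw [intervalIntegral.integral_neg, ha₂def]
    have := hu.2.2 x hx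
    simp only []
    linarith [this]
  -- integrability of coefficient functions
  have hv'B : IntegrableOn (fun y => -(v' y * B y)) (Set.Icc 0 1) :=
    ((hv'c.mul hB).neg.integrableOn_Icc)
  have hu'B : IntegrableOn (fun y => -(u' y * B y)) (Set.Icc 0 1) :=
    ((hu'c.mul hB).neg.integrableOn_Icc)
  -- FTC for u and v
  have hftc : ∀ (w w' : ℝ → ℝ), IsBSolution B w w' →
      ∀ x ∈ Set.Icc (0:ℝ) 1, w x = w 0 + ∫ y in (0:ℝ)..x, w' y := by
    intro w w' hw x hx
    have hwc : ContinuousOn w (Set.Icc 0 1) := fun y hy => (hw.1 y hy).continuousWithinAt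
    have hcont : ContinuousOn w (Set.Icc 0 x) := hwc.mono (Set.Icc_subset_Icc le_rfl hx.2)
    have hderiv : ∀ y ∈ Set.Ioo (0:ℝ) x, HasDerivWithinAt w (w' y) (Set.Ioi y) y := by
      intro y hy
      have hymem : y ∈ Set.Icc (0:ℝ) 1 := ⟨hy.1.le, (hy.2.trans_le hx.2).le⟩
      have h1lt : y < 1 := hy.2.trans_le hx.2
      exact ((hw.1 y hymem).hasDerivAt (Icc_mem_nhds hy.1 h1lt)).hasDerivWithinAt
    have hint : IntervalIntegrable w' volume 0 x :=
      (intervalIntegrable_iff_integrableOn_Icc_of_le hx.1).2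
        ((hw.2.1.mono (Set.Icc_subset_Icc le_rfl hx.2)).integrableOn_Icc)
    have := intervalIntegral.integral_eq_sub_of_hasDeriv_right_of_le hx.1 hcont hderiv hint
    linarith [this]
  -- Wronskian is constant
  have hW : ∀ x ∈ Set.Icc (0:ℝ) 1, u' x * v x - u x * v' x = α := by
    intro x hx
    have happ1 := prod_rule_int hu'B (hv'c.integrableOn_Icc)
      ha₂rep (hftc v v' hv) x hx
    have happ2 := prod_rule_int ((hu'c.integrableOn_Icc))
      hv'B (hftc u u' hu) ha₁rep x hx
    -- a₂ x * v x - u x * a₁ x = u'0 * v0 - u0 * v'0 + ∫ (zero)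
    have hzero : (∫ y in (0:ℝ)..x, (-(u' y * B y) * v y + a₂ y * v' y))
        - (∫ y in (0:ℝ)..x, (u' y * a₁ y + u y * -(v' y * B y))) = 0 := by
      have hint1 : IntervalIntegrable (fun y => -(u' y * B y) * v y + a₂ y * v' y) volume 0 x :=
        iiIcc (((((hu'c.mul hB).neg.mul hvcont).add (ha₂c.mul hv'c)).mono
          (Set.Icc_subset_Icc le_rfl hx.2)).integrableOn_Icc) hx.1
      have hint2 : IntervalIntegrable (fun y => u' y * a₁ y + u y * -(v' y * B y)) volume 0 x :=
        iiIcc ((((hu'c.mul ha₁c).add (hucont.mul (hv'c.mul hB).neg)).mono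
          (Set.Icc_subset_Icc le_rfl hx.2)).integrableOn_Icc) hx.1
      rw [← intervalIntegral.integral_sub hint1 hint2]
      have : ∀ y ∈ Set.uIcc (0:ℝ) x,
          (-(u' y * B y) * v y + a₂ y * v' y) - (u' y * a₁ y + u y * -(v' y * B y)) = 0 := by
        intro y hy
        simp only [ha₁def, ha₂def]
        ring
      rw [intervalIntegral.integral_congr this, intervalIntegral.integral_zero]
    have hux : u' x * v x - u x * v' x = a₂ x * v x - u x * a₁ x := by
      simp only [ha₁def, ha₂def]; ring
    rw [hux, happ1, happ2, hαdef]
    rw [hB0] at *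
    nlinarith [hzero]
  -- presentations of greenOp and greenOpDeriv in terms of P and Q
  have hFeq : ∀ z, greenOp α u v f z = α⁻¹ * (v z * P z + u z * Q z) := fun z => rfl
  have hF'eq : ∀ z, greenOpDeriv α u u' v v' f z = α⁻¹ * (v' z * P z + u' z * Q z) :=
    fun z => rfl
  have hFc : ContinuousOn (greenOp α u v f) (Set.Icc 0 1) := by
    have : greenOp α u v f = fun z => α⁻¹ * (v z * P z + u z * Q z) := funext hFeq
    rw [this]
    exact continuousOn_const.mul ((hvcont.mul hPc).add (hucont.mul hQc))
  have hDc : ContinuousOn (greenOpDeriv α u u' v v' f) (Set.Icc 0 1) := by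
    have : greenOpDeriv α u u' v v' f = fun z => α⁻¹ * (v' z * P z + u' z * Q z) :=
      funext hF'eq
    rw [this]
    exact continuousOn_const.mul ((hv'c.mul hPc).add (hu'c.mul hQc))
  -- representation of K = F' - F·B as a primitive
  have hKrep : ∀ x ∈ Set.Icc (0:ℝ) 1,
      greenOpDeriv α u u' v v' f x - greenOp α u v f x * B x
        = α⁻¹ * (v' 0 * 0 + u' 0 * Q0)
          + ∫ y in (0:ℝ)..x, -(B y * greenOpDeriv α u u' v v' f y + f y) := by
    intro x hx
    have happ1 := prod_rule_int hv'B hufi ha₁rep hPrep x hx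
    have happ2 := prod_rule_int hu'B hvfi.neg ha₂rep hQrep x hx
    have hφ1 : IntervalIntegrable (fun y => -(v' y * B y) * P y + a₁ y * (u y * f y))
        volume 0 x :=
      iiIcc (MeasureTheory.IntegrableOn.mono_set
        (((((hv'c.mul hB).neg.mul hPc).integrableOn_Icc).add
          (IntegrableOn.continuousOn_mul ha₁c hufi isCompact_Icc)) :
            IntegrableOn (fun y => -(v' y * B y) * P y + a₁ y * (u y * f y))
              (Set.Icc 0 1) volume)
        (Set.Icc_subset_Icc le_rfl hx.2)) hx.1
    have hφ2 : IntervalIntegrable (fun y => -(u' y * B y) * Q y + a₂ y * (-(v y * f y)))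
        volume 0 x :=
      iiIcc (MeasureTheory.IntegrableOn.mono_set
        (((((hu'c.mul hB).neg.mul hQc).integrableOn_Icc).add
          (IntegrableOn.continuousOn_mul ha₂c hvfi.neg isCompact_Icc)) :
            IntegrableOn (fun y => -(u' y * B y) * Q y + a₂ y * (-(v y * f y)))
              (Set.Icc 0 1) volume)
        (Set.Icc_subset_Icc le_rfl hx.2)) hx.1
    have key : greenOpDeriv α u u' v v' f x - greenOp α u v f x * B x
        = α⁻¹ * (a₁ x * P x + a₂ x * Q x) := by
      rw [hFeq, hF'eq]
      simp only [ha₁def, ha₂def]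
      ring
    have hsum : (∫ y in (0:ℝ)..x, (-(v' y * B y) * P y + a₁ y * (u y * f y)))
        + (∫ y in (0:ℝ)..x, (-(u' y * B y) * Q y + a₂ y * (-(v y * f y))))
        = α * ∫ y in (0:ℝ)..x, -(B y * greenOpDeriv α u u' v v' f y + f y) := by
      rw [← intervalIntegral.integral_const_mul, ← intervalIntegral.integral_add hφ1 hφ2]
      refine intervalIntegral.integral_congr fun y hy => ?_
      rw [Set.uIcc_of_le hx.1] at hy
      have hyI : y ∈ Set.Icc (0:ℝ) 1 := ⟨hy.1, hy.2.trans hx.2⟩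
      have hWy := hW y hyI
      have hinv : α * α⁻¹ = 1 := mul_inv_cancel₀ hα
      rw [hF'eq]
      simp only [ha₁def, ha₂def]
      linear_combination (-(f y)) * hWy + (B y * (v' y * P y + u' y * Q y)) * hinv
    have hinv : α⁻¹ * α = 1 := inv_mul_cancel₀ hα
    rw [key, happ1, happ2]
    linear_combination α⁻¹ * hsum
      + (∫ y in (0:ℝ)..x, -(B y * greenOpDeriv α u u' v v' f y + f y)) * hinv
  -- facts about h and g
  have hgi : IntegrableOn g (Set.Icc 0 1) := hh.1
  have hgprimc : ContinuousOn (fun x => ∫ t in (0:ℝ)..x, g t) (Set.Icc 0 1) := by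
    have := intervalIntegral.continuousOn_primitive_interval (a := 0) (b := 1)
      (μ := volume) (f := g) (by rwa [huicc])
    rwa [huicc] at this
  have hhc : ContinuousOn h (Set.Icc 0 1) := hgprimc.congr fun x hx => hh.2.2 x hx
  have hh1 : h 1 = 0 := by rw [hh.2.2 1 hmem1]; exact hh.2.1
  have hhrep : ∀ x ∈ Set.Icc (0:ℝ) 1, h x = 0 + ∫ t in (0:ℝ)..x, g t := by
    intro x hx; rw [zero_add]; exact hh.2.2 x hx
  -- integrability of k
  have hki : IntegrableOn (fun y => -(B y * greenOpDeriv α u u' v v' f y + f y))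
      (Set.Icc 0 1) := (((hB.mul hDc).integrableOn_Icc).add hf).neg
  -- final integration by parts
  have hfinal := prod_rule_int hki hgi hKrep hhrep 1 hmem1
  rw [hh1, mul_zero, mul_zero, zero_add] at hfinal
  -- split the big integral
  have iDg : IntervalIntegrable (fun x => greenOpDeriv α u u' v v' f x * g x) volume 0 1 :=
    iiIcc (IntegrableOn.continuousOn_mul hDc hgi isCompact_Icc) h01
  have iB : IntervalIntegrable
      (fun x => (greenOpDeriv α u u' v v' f x * h x + greenOp α u v f x * g x) * B x)
      volume 0 1 :=
    iiIcc (MeasureTheory.IntegrableOn.mul_continuousOn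
      ((((hDc.mul hhc).integrableOn_Icc).add
        (IntegrableOn.continuousOn_mul hFc hgi isCompact_Icc)) :
          IntegrableOn (fun x => greenOpDeriv α u u' v v' f x * h x
            + greenOp α u v f x * g x) (Set.Icc 0 1) volume)
      hB isCompact_Icc) h01
  have ifh : IntervalIntegrable (fun x => f x * h x) volume 0 1 :=
    iiIcc (hf.mul_continuousOn hhc isCompact_Icc) h01
  have hsplit : (∫ y in (0:ℝ)..1,
        (-(B y * greenOpDeriv α u u' v v' f y + f y) * h y
          + (greenOpDeriv α u u' v v' f y - greenOp α u v f y * B y) * g y))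
      = (∫ x in (0:ℝ)..1, greenOpDeriv α u u' v v' f x * g x)
        - (∫ x in (0:ℝ)..1,
            (greenOpDeriv α u u' v v' f x * h x + greenOp α u v f x * g x) * B x)
        - ∫ x in (0:ℝ)..1, f x * h x := by
    rw [← intervalIntegral.integral_sub iDg iB,
      ← intervalIntegral.integral_sub (iDg.sub iB) ifh]
    refine intervalIntegral.integral_congr fun y hy => ?_
    ring
  simp only [Eform]
  rw [← hfinal] at hsplit
  linarith [hsplit]
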